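/- Let μ_1,…,μ_k be probability measures on ℝ with finite second moments, π_1,…,π_k > 0 with Σ_s π_s = 1, b(z) := Σ_{s=1}^k π_s z_s for z ∈ ℝ^k, and let Γ(μ_1,…,μ_k) be the set of probability measures on ℝ^k whose s-th marginal is μ_s for every s. Let γ* be the pushforward of Unif(0,1) under u ↦ (F_{μ_1}⁻¹(u),…,F_{μ_k}⁻¹(u)). Then: (i) γ* ∈ Γ(μ_1,…,μ_k); (ii) γ* minimizes γ ↦ Σ_{s=1}^k π_s ∫_{ℝ^k} |z_s − b(z)|² dγ(z) over Γ(μ_1,…,μ_k); (iii) the pushforward b_#γ* equals ν̄, the pushforward of Unif(0,1) under u ↦ Σ_s π_s F_{μ_s}⁻¹(u); and (iv) the minimal multimarginal value equals inf_ν Σ_{s=1}^k π_s W₂²(μ_s, ν), the infimum being over probability measures ν on ℝ with finite second moment. (The multimarginal formulation, equations (9)–(10) of Section 4.) -/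

import Mathlib

open MeasureTheory ProbabilityTheory

/-- Squared 2-Wasserstein distance between measures on ℝ: infimum of ∫|x−y|² dγ over
couplings γ of P and Q. -/
noncomputable def W2sq (P Q : Measure ℝ) : ℝ :=
  sInf { c : ℝ | ∃ γ : Measure (ℝ × ℝ),
    γ.map Prod.fst = P ∧ γ.map Prod.snd = Q ∧ c = ∫ z, (z.1 - z.2) ^ 2 ∂γ }

/-- CDF of a measure on ℝ. -/
noncomputable def cdf' (μ : Measure ℝ) (x : ℝ) : ℝ := (μ (Set.Iic x)).toReal

/-- Quantile function of a measure on ℝ: `F_μ⁻¹(u) = inf {x : F_μ(x) ≥ u}`. -/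
noncomputable def quantile' (μ : Measure ℝ) (u : ℝ) : ℝ := sInf { x : ℝ | u ≤ cdf' μ x }

/-- Uniform distribution on (0,1): Lebesgue measure restricted to (0,1). -/
noncomputable def unif01 : Measure ℝ := volume.restrict (Set.Ioo 0 1)

open Set Filter Topology

section Quantile
variable (μ : Measure ℝ) [IsProbabilityMeasure μ]

lemma cdf'_eq (x : ℝ) : cdf' μ x = cdf μ x := (cdf_eq_real μ x).symm

lemma quantile_set_nonempty {u : ℝ} (hu : u < 1) : { x : ℝ | u ≤ cdf' μ x }.Nonempty := by
  have h := tendsto_cdf_atTop μ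
  have : ∀ᶠ x in atTop, u ≤ cdf μ x := h.eventually_const_le hu
  obtain ⟨x, hx⟩ := this.exists
  exact ⟨x, by rwa [mem_setOf_eq, cdf'_eq]⟩

lemma quantile_set_bddBelow {u : ℝ} (hu : 0 < u) : BddBelow { x : ℝ | u ≤ cdf' μ x } := by
  have h := tendsto_cdf_atBot μ
  have : ∀ᶠ x in atBot, cdf μ x < u := h.eventually_lt_const hu
  obtain ⟨y, hy⟩ := this.exists
  refine ⟨y, fun x hx => ?_⟩
  by_contra hxy
  push_neg at hxy
  have : cdf μ x ≤ cdf μ y := monotone_cdf μ hxy.le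
  rw [mem_setOf_eq, cdf'_eq] at hx
  linarith

lemma quantile_le_iff {u : ℝ} (hu0 : 0 < u) (hu1 : u < 1) (x : ℝ) :
    quantile' μ u ≤ x ↔ u ≤ cdf' μ x := by
  constructor
  · intro h
    rw [cdf'_eq]
    have key : ∀ ε > 0, u ≤ cdf μ (x + ε) := by
      intro ε hε
      obtain ⟨y, hy, hyx⟩ := Real.lt_sInf_add_pos (quantile_set_nonempty μ hu1) hε
      rw [mem_setOf_eq, cdf'_eq] at hy
      have h' : sInf {x | u ≤ cdf' μ x} ≤ x := h
      exact hy.trans (monotone_cdf μ (by linarith))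
    have htend : Tendsto (fun ε : ℝ => cdf μ (x + ε)) (𝓝[>] (0:ℝ)) (𝓝 (cdf μ x)) := by
      have h1 : ContinuousWithinAt (cdf μ) (Ici x) x := (cdf μ).right_continuous x
      have h2 : Tendsto (fun ε : ℝ => x + ε) (𝓝[>] (0:ℝ)) (𝓝[Ici x] x) := by
        apply tendsto_nhdsWithin_of_tendsto_nhds_of_eventually_within
        · exact (continuous_const.add continuous_id).tendsto' 0 x (by simp) |>.mono_left
            nhdsWithin_le_nhds
        · filter_upwards [self_mem_nhdsWithin] with ε (hε : 0 < ε)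
          simp only [mem_Ici]
          linarith
      exact h1.tendsto.comp h2
    exact ge_of_tendsto htend (by filter_upwards [self_mem_nhdsWithin] with ε hε using key ε hε)
  · intro h
    exact csInf_le (quantile_set_bddBelow μ hu0) h

lemma monotoneOn_quantile : MonotoneOn (quantile' μ) (Set.Ioo 0 1) := by
  intro u hu v hv huv
  exact csInf_le_csInf (quantile_set_bddBelow μ hu.1) (quantile_set_nonempty μ hv.2)
    (fun x hx => le_trans huv hx)

lemma aemeasurable_quantile : AEMeasurable (quantile' μ) unif01 :=
  aemeasurable_restrict_of_monotoneOn measurableSet_Ioo (monotoneOn_quantile μ)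

instance : IsProbabilityMeasure unif01 := by
  constructor; simp [unif01, Real.volume_Ioo]

lemma unif01_map_quantile : unif01.map (quantile' μ) = μ := by
  have hae := aemeasurable_quantile μ
  have : IsProbabilityMeasure (unif01.map (quantile' μ)) := Measure.isProbabilityMeasure_map hae
  refine Measure.ext_of_Iic _ _ (fun x => ?_)
  rw [Measure.map_apply_of_aemeasurable hae measurableSet_Iic]
  rw [unif01, Measure.restrict_apply₀' measurableSet_Ioo.nullMeasurableSet]
  have hset : quantile' μ ⁻¹' Iic x ∩ Ioo 0 1 = Iic (cdf' μ x) ∩ Ioo 0 1 := by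
    ext u
    simp only [mem_inter_iff, mem_preimage, mem_Iic, mem_Ioo, and_congr_left_iff]
    intro hu
    rw [quantile_le_iff μ hu.1 hu.2]
  rw [hset]
  have h0 : 0 ≤ cdf' μ x := ENNReal.toReal_nonneg
  have h1 : cdf' μ x ≤ 1 := by rw [cdf'_eq]; exact cdf_le_one μ x
  have hvol : volume (Iic (cdf' μ x) ∩ Ioo 0 1) = ENNReal.ofReal (cdf' μ x) := by
    rcases eq_or_lt_of_le h1 with h | h
    · have : Iic (cdf' μ x) ∩ Ioo 0 1 = Ioo 0 1 := by
        ext u; simp only [mem_inter_iff, mem_Iic, mem_Ioo]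
        exact ⟨fun hu => hu.2, fun hu => ⟨by linarith [hu.2], hu⟩⟩
      rw [this, Real.volume_Ioo, h]; norm_num
    · have : Iic (cdf' μ x) ∩ Ioo 0 1 = Ioc 0 (cdf' μ x) := by
        ext u; simp only [mem_inter_iff, mem_Iic, mem_Ioo, mem_Ioc]
        exact ⟨fun hu => ⟨hu.2.1, hu.1⟩, fun hu => ⟨hu.2, hu.1, lt_of_le_of_lt hu.2 h⟩⟩
      rw [this, Real.volume_Ioc, sub_zero]
  rw [hvol, cdf'_eq, ofReal_cdf μ x]


lemma memL2_integrable_mul {α : Type*} {m : MeasurableSpace α} {ρ : Measure α} {f g : α → ℝ}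
    (hf : MemLp f 2 ρ) (hg : MemLp g 2 ρ) : Integrable (fun x => f x * g x) ρ := by
  have h := hg.smul (φ := f) hf (p := 2) (q := 2) (r := 1) (hpqr := ⟨by
    rw [inv_one]
    exact ENNReal.inv_two_add_inv_two⟩)
  exact memLp_one_iff_integrable.mp h

lemma memℒp_of_map {α : Type*} {m : MeasurableSpace α} {ρ : Measure α} {φ : α → ℝ}
    (hφ : AEMeasurable φ ρ) (h : MemLp id 2 (ρ.map φ)) : MemLp φ 2 ρ := by
  have := (memLp_map_measure_iff aestronglyMeasurable_id hφ).mp h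
  simpa [Function.id_comp] using this


noncomputable def gfun (x t : ℝ) : ℝ := (if t < x then 1 else 0) - (if t < 0 then 1 else 0)

lemma measurable_gfun : Measurable (fun p : ℝ × ℝ => gfun p.1 p.2) := by
  unfold gfun
  apply Measurable.sub
  · exact Measurable.ite (measurableSet_lt measurable_snd measurable_fst)
      measurable_const measurable_const
  · exact Measurable.ite (measurableSet_lt measurable_snd measurable_const)
      measurable_const measurable_const

lemma measurable_gfun_right (x : ℝ) : Measurable (gfun x) :=
  measurable_gfun.comp (measurable_const.prodMk measurable_id)

lemma gfun_eq_pos (x : ℝ) (hx : 0 ≤ x) (t : ℝ) :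
    gfun x t = (Ico 0 x).indicator (fun _ => (1:ℝ)) t := by
  unfold gfun
  rw [Set.indicator_apply]
  by_cases h1 : t < x <;> by_cases h2 : t < 0
  · simp [h1, h2, mem_Ico, not_le.mpr h2]
  · simp [h1, h2, mem_Ico, not_lt.mp h2]
  · exact absurd (lt_of_lt_of_le h2 hx) h1
  · simp [h1, h2, mem_Ico]

lemma gfun_eq_neg (x : ℝ) (hx : x ≤ 0) (t : ℝ) :
    gfun x t = - (Ico x 0).indicator (fun _ => (1:ℝ)) t := by
  unfold gfun
  rw [Set.indicator_apply]
  by_cases h1 : t < x <;> by_cases h2 : t < 0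
  · simp [h1, h2, mem_Ico, not_le.mpr h1]
  · exact absurd (lt_of_lt_of_le h1 hx) h2
  · simp [h1, h2, mem_Ico, not_lt.mp h1]
  · simp [h1, h2, mem_Ico]

lemma volume_Ico_lt_top {a c : ℝ} : volume (Ico a c) < ⊤ := by
  rw [Real.volume_Ico]; exact ENNReal.ofReal_lt_top

lemma integrable_gfun (x : ℝ) : Integrable (gfun x) (volume : Measure ℝ) := by
  rcases le_total 0 x with hx | hx
  · have h : IntegrableOn (fun _ => (1:ℝ)) (Ico 0 x) volume :=
      integrableOn_const volume_Ico_lt_top.ne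
    exact (h.integrable_indicator measurableSet_Ico).congr
      (ae_of_all _ fun t => (gfun_eq_pos x hx t).symm)
  · have h : IntegrableOn (fun _ => (1:ℝ)) (Ico x 0) volume :=
      integrableOn_const volume_Ico_lt_top.ne
    exact ((h.integrable_indicator measurableSet_Ico).neg).congr
      (ae_of_all _ fun t => (gfun_eq_neg x hx t).symm)

lemma integral_gfun (x : ℝ) : ∫ t, gfun x t = x := by
  rcases le_total 0 x with hx | hx
  · rw [integral_congr_ae (ae_of_all _ (gfun_eq_pos x hx))]
    rw [integral_indicator_const (1:ℝ) measurableSet_Ico]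
    simp [Real.volume_Ico, hx]
  · rw [integral_congr_ae (ae_of_all _ (gfun_eq_neg x hx))]
    rw [integral_neg, integral_indicator_const (1:ℝ) measurableSet_Ico]
    rw [measureReal_def, Real.volume_Ico, smul_eq_mul, mul_one, ENNReal.toReal_ofReal (by linarith)]
    ring

lemma norm_integral_gfun (x : ℝ) : ∫ t, ‖gfun x t‖ = |x| := by
  rcases le_total 0 x with hx | hx
  · have h : ∀ t, ‖gfun x t‖ = (Ico 0 x).indicator (fun _ => (1:ℝ)) t := by
      intro t; rw [gfun_eq_pos x hx t]
      simp only [Set.indicator_apply]; split_ifs <;> simp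
    rw [integral_congr_ae (ae_of_all _ h), integral_indicator_const (1:ℝ) measurableSet_Ico]
    rw [measureReal_def, Real.volume_Ico, smul_eq_mul, mul_one, ENNReal.toReal_ofReal (by linarith), sub_zero,
      abs_of_nonneg hx]
  · have h : ∀ t, ‖gfun x t‖ = (Ico x 0).indicator (fun _ => (1:ℝ)) t := by
      intro t; rw [gfun_eq_neg x hx t]
      simp only [Set.indicator_apply]; split_ifs <;> simp
    rw [integral_congr_ae (ae_of_all _ h), integral_indicator_const (1:ℝ) measurableSet_Ico]
    rw [measureReal_def, Real.volume_Ico, smul_eq_mul, mul_one, ENNReal.toReal_ofReal (by linarith),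
      abs_of_nonpos hx, zero_sub]


section Hoeffding

lemma coupling_isProb {γ : Measure (ℝ×ℝ)} {P : Measure ℝ} [IsProbabilityMeasure P]
    (h1 : γ.map Prod.fst = P) : IsProbabilityMeasure γ := by
  constructor
  have h := Measure.map_apply (μ := γ) measurable_fst MeasurableSet.univ
  rw [h1] at h
  simpa [measure_univ] using h.symm

lemma marginal_fst_apply {γ : Measure (ℝ×ℝ)} {P : Measure ℝ}
    (h1 : γ.map Prod.fst = P) (s : ℝ) : γ {z : ℝ×ℝ | s < z.1} = P (Ioi s) := by
  rw [← h1, Measure.map_apply measurable_fst measurableSet_Ioi]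
  rfl

lemma marginal_snd_apply {γ : Measure (ℝ×ℝ)} {Q : Measure ℝ}
    (h2 : γ.map Prod.snd = Q) (t : ℝ) : γ {z : ℝ×ℝ | t < z.2} = Q (Ioi t) := by
  rw [← h2, Measure.map_apply measurable_snd measurableSet_Ioi]
  rfl

lemma J_eq (γ : Measure (ℝ×ℝ)) [IsProbabilityMeasure γ]
    {P Q : Measure ℝ} (h1 : γ.map Prod.fst = P) (h2 : γ.map Prod.snd = Q) (s t : ℝ) :
    ∫ z, gfun z.1 s * gfun z.2 t ∂γ
      = (γ {z : ℝ×ℝ | s < z.1 ∧ t < z.2}).toReal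
        - (if t < 0 then (1:ℝ) else 0) * (P (Ioi s)).toReal
        - (if s < 0 then (1:ℝ) else 0) * (Q (Ioi t)).toReal
        + (if s < 0 then (1:ℝ) else 0) * (if t < 0 then (1:ℝ) else 0) := by
  set c : ℝ := if s < 0 then (1:ℝ) else 0 with hc
  set d : ℝ := if t < 0 then (1:ℝ) else 0 with hd
  have hA : MeasurableSet {z : ℝ×ℝ | s < z.1} := measurableSet_lt measurable_const measurable_fst
  have hB : MeasurableSet {z : ℝ×ℝ | t < z.2} := measurableSet_lt measurable_const measurable_snd
  have hABm : MeasurableSet {z : ℝ×ℝ | s < z.1 ∧ t < z.2} := hA.inter hB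
  have hpt : ∀ z : ℝ×ℝ, gfun z.1 s * gfun z.2 t =
      {z : ℝ×ℝ | s < z.1 ∧ t < z.2}.indicator (fun _ => (1:ℝ)) z
      - d * ({z : ℝ×ℝ | s < z.1}.indicator (fun _ => (1:ℝ)) z)
      - c * ({z : ℝ×ℝ | t < z.2}.indicator (fun _ => (1:ℝ)) z)
      + c * d := by
    intro z
    unfold gfun
    simp only [Set.indicator_apply, mem_setOf_eq]
    by_cases hzs : s < z.1 <;> by_cases hzt : t < z.2 <;>
      by_cases hs0 : s < 0 <;> by_cases ht0 : t < 0 <;>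
      simp [hzs, hzt, hs0, ht0, hc, hd]
  have iAB : Integrable ({z : ℝ×ℝ | s < z.1 ∧ t < z.2}.indicator (fun _ => (1:ℝ))) γ :=
    (integrable_const (1:ℝ)).indicator hABm
  have iA : Integrable (fun z => d * ({z : ℝ×ℝ | s < z.1}.indicator (fun _ => (1:ℝ)) z)) γ :=
    ((integrable_const (1:ℝ)).indicator hA).const_mul d
  have iB : Integrable (fun z => c * ({z : ℝ×ℝ | t < z.2}.indicator (fun _ => (1:ℝ)) z)) γ :=
    ((integrable_const (1:ℝ)).indicator hB).const_mul c
  rw [integral_congr_ae (ae_of_all _ hpt)]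
  have iS1 : Integrable (fun a : ℝ×ℝ =>
      {z : ℝ×ℝ | s < z.1 ∧ t < z.2}.indicator (fun _ => (1:ℝ)) a
      - d * ({z : ℝ×ℝ | s < z.1}.indicator (fun _ => (1:ℝ)) a)) γ := iAB.sub iA
  have iS2 : Integrable (fun a : ℝ×ℝ =>
      {z : ℝ×ℝ | s < z.1 ∧ t < z.2}.indicator (fun _ => (1:ℝ)) a
      - d * ({z : ℝ×ℝ | s < z.1}.indicator (fun _ => (1:ℝ)) a)
      - c * ({z : ℝ×ℝ | t < z.2}.indicator (fun _ => (1:ℝ)) a)) γ := iS1.sub iB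
  rw [integral_add iS2 (integrable_const (c*d))]
  rw [integral_sub iS1 iB, integral_sub iAB iA]
  rw [integral_indicator_const (1:ℝ) hABm, integral_const_mul, integral_const_mul,
    integral_indicator_const (1:ℝ) hA, integral_indicator_const (1:ℝ) hB, integral_const]
  simp only [measureReal_def]
  rw [marginal_fst_apply h1, marginal_snd_apply h2]
  simp [measure_univ]

lemma fubini_rep (γ : Measure (ℝ×ℝ)) [IsProbabilityMeasure γ]
    (hx : MemLp (fun z : ℝ×ℝ => z.1) 2 γ) (hy : MemLp (fun z : ℝ×ℝ => z.2) 2 γ) :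
    (∫ z, z.1 * z.2 ∂γ
        = ∫ p : ℝ×ℝ, (∫ z, gfun z.1 p.1 * gfun z.2 p.2 ∂γ) ∂(volume.prod volume)) ∧
    Integrable (fun p : ℝ×ℝ => ∫ z, gfun z.1 p.1 * gfun z.2 p.2 ∂γ) (volume.prod volume) := by
  have hFmeas : Measurable (fun q : (ℝ×ℝ) × (ℝ×ℝ) => gfun q.1.1 q.2.1 * gfun q.1.2 q.2.2) :=
    (measurable_gfun.comp ((measurable_fst.fst).prodMk (measurable_snd.fst))).mul
      (measurable_gfun.comp ((measurable_fst.snd).prodMk (measurable_snd.snd)))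
  have hxy : Integrable (fun z : ℝ×ℝ => z.1 * z.2) γ := memL2_integrable_mul hx hy
  have habs : Integrable (fun z : ℝ×ℝ => |z.1| * |z.2|) γ := by
    have := hxy.abs
    refine this.congr (ae_of_all _ fun z => ?_)
    simp [abs_mul]
  have hnormint : ∀ z : ℝ×ℝ,
      (∫ p : ℝ×ℝ, ‖gfun z.1 p.1 * gfun z.2 p.2‖ ∂(volume.prod volume)) = |z.1| * |z.2| := by
    intro z
    have : ∀ p : ℝ×ℝ, ‖gfun z.1 p.1 * gfun z.2 p.2‖ = ‖gfun z.1 p.1‖ * ‖gfun z.2 p.2‖ := by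
      intro p; exact norm_mul _ _
    rw [integral_congr_ae (ae_of_all _ this),
      integral_prod_mul (f := fun x => ‖gfun z.1 x‖) (g := fun x => ‖gfun z.2 x‖),
      norm_integral_gfun, norm_integral_gfun]
  have hFint : Integrable (fun q : (ℝ×ℝ)×(ℝ×ℝ) =>
      gfun q.1.1 q.2.1 * gfun q.1.2 q.2.2) (γ.prod (volume.prod volume)) := by
    rw [integrable_prod_iff hFmeas.aestronglyMeasurable]
    constructor
    · refine ae_of_all _ fun z => ?_
      exact (integrable_gfun z.1).mul_prod (integrable_gfun z.2)
    · refine habs.congr (ae_of_all _ fun z => ?_)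
      exact (hnormint z).symm
  constructor
  · have lhs : ∫ z, z.1 * z.2 ∂γ
        = ∫ z : ℝ×ℝ, (∫ p : ℝ×ℝ, gfun z.1 p.1 * gfun z.2 p.2 ∂(volume.prod volume)) ∂γ := by
      refine integral_congr_ae (ae_of_all _ fun z => ?_)
      show z.1 * z.2 = ∫ p : ℝ×ℝ, gfun z.1 p.1 * gfun z.2 p.2 ∂(volume.prod volume)
      rw [integral_prod_mul (f := gfun z.1) (g := gfun z.2), integral_gfun, integral_gfun]
    rw [lhs]
    exact integral_integral_swap (f := fun (z p : ℝ×ℝ) => gfun z.1 p.1 * gfun z.2 p.2) hFint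
  · exact hFint.integral_prod_right

lemma gamma2_set (P Q : Measure ℝ) [IsProbabilityMeasure P] [IsProbabilityMeasure Q] (s t : ℝ) :
    (unif01.map (fun u => (quantile' P u, quantile' Q u))) {z : ℝ×ℝ | s < z.1 ∧ t < z.2}
      = ENNReal.ofReal (1 - max (cdf' P s) (cdf' Q t)) := by
  have hpair : AEMeasurable (fun u => (quantile' P u, quantile' Q u)) unif01 :=
    (aemeasurable_quantile P).prodMk (aemeasurable_quantile Q)
  have hset : MeasurableSet {z : ℝ×ℝ | s < z.1 ∧ t < z.2} :=
    (measurableSet_lt measurable_const measurable_fst).inter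
      (measurableSet_lt measurable_const measurable_snd)
  rw [Measure.map_apply_of_aemeasurable hpair hset]
  rw [unif01, Measure.restrict_apply₀' measurableSet_Ioo.nullMeasurableSet]
  have hseteq : (fun u => (quantile' P u, quantile' Q u)) ⁻¹' {z : ℝ×ℝ | s < z.1 ∧ t < z.2}
      ∩ Ioo 0 1 = Ioo (max (cdf' P s) (cdf' Q t)) 1 := by
    ext u
    simp only [mem_inter_iff, mem_preimage, mem_setOf_eq, mem_Ioo, max_lt_iff]
    constructor
    · rintro ⟨⟨h1, h2⟩, hu0, hu1⟩
      refine ⟨⟨?_, ?_⟩, hu1⟩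
      · by_contra hle; push_neg at hle
        exact absurd ((quantile_le_iff P hu0 hu1 s).mpr hle) (not_le.mpr h1)
      · by_contra hle; push_neg at hle
        exact absurd ((quantile_le_iff Q hu0 hu1 t).mpr hle) (not_le.mpr h2)
    · rintro ⟨⟨h1, h2⟩, hu1⟩
      have hFP : (0:ℝ) ≤ cdf' P s := ENNReal.toReal_nonneg
      have hu0 : 0 < u := lt_of_le_of_lt hFP h1
      refine ⟨⟨?_, ?_⟩, hu0, hu1⟩
      · by_contra hle; push_neg at hle
        exact absurd ((quantile_le_iff P hu0 hu1 s).mp hle) (not_le.mpr h1)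
      · by_contra hle; push_neg at hle
        exact absurd ((quantile_le_iff Q hu0 hu1 t).mp hle) (not_le.mpr h2)
  rw [hseteq, Real.volume_Ioo]

lemma Ioi_toReal_prob (P : Measure ℝ) [IsProbabilityMeasure P] (s : ℝ) :
    P (Ioi s) = ENNReal.ofReal (1 - cdf' P s) := by
  have h := measure_compl (measurableSet_Iic (a := s)) (measure_ne_top P _)
  rw [compl_Iic] at h
  rw [h, measure_univ, cdf'_eq, ← ofReal_cdf P s]
  rw [ENNReal.ofReal_sub _ (cdf_nonneg P s)]
  simp

lemma gamma2_ge (P Q : Measure ℝ) [IsProbabilityMeasure P] [IsProbabilityMeasure Q]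
    (γ : Measure (ℝ×ℝ)) (h1 : γ.map Prod.fst = P) (h2 : γ.map Prod.snd = Q) (s t : ℝ) :
    γ {z : ℝ×ℝ | s < z.1 ∧ t < z.2}
      ≤ (unif01.map (fun u => (quantile' P u, quantile' Q u))) {z : ℝ×ℝ | s < z.1 ∧ t < z.2} := by
  rw [gamma2_set P Q s t]
  have hFP : cdf' P s ≤ 1 := by rw [cdf'_eq]; exact cdf_le_one P s
  have hFQ : cdf' Q t ≤ 1 := by rw [cdf'_eq]; exact cdf_le_one Q t
  rcases le_total (cdf' P s) (cdf' Q t) with h | h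
  · rw [max_eq_right h, ← Ioi_toReal_prob Q t, ← marginal_snd_apply h2 t]
    exact measure_mono (fun z hz => hz.2)
  · rw [max_eq_left h, ← Ioi_toReal_prob P s, ← marginal_fst_apply h1 s]
    exact measure_mono (fun z hz => hz.1)

lemma hoeffding (P Q : Measure ℝ) [IsProbabilityMeasure P] [IsProbabilityMeasure Q]
    (hP2 : MemLp id 2 P) (hQ2 : MemLp id 2 Q)
    (γ : Measure (ℝ×ℝ)) (h1 : γ.map Prod.fst = P) (h2 : γ.map Prod.snd = Q) :
    ∫ z, z.1 * z.2 ∂γ ≤ ∫ u, quantile' P u * quantile' Q u ∂unif01 := by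
  have hγprob : IsProbabilityMeasure γ := coupling_isProb h1
  set γ2 : Measure (ℝ×ℝ) := unif01.map (fun u => (quantile' P u, quantile' Q u)) with hγ2def
  have hpair : AEMeasurable (fun u => (quantile' P u, quantile' Q u)) unif01 :=
    (aemeasurable_quantile P).prodMk (aemeasurable_quantile Q)
  have hγ21 : γ2.map Prod.fst = P := by
    rw [hγ2def, AEMeasurable.map_map_of_aemeasurable measurable_fst.aemeasurable hpair]
    have he : (Prod.fst ∘ fun u => (quantile' P u, quantile' Q u)) = quantile' P := rfl
    rw [he]; exact unif01_map_quantile P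
  have hγ22 : γ2.map Prod.snd = Q := by
    rw [hγ2def, AEMeasurable.map_map_of_aemeasurable measurable_snd.aemeasurable hpair]
    have he : (Prod.snd ∘ fun u => (quantile' P u, quantile' Q u)) = quantile' Q := rfl
    rw [he]; exact unif01_map_quantile Q
  have hγ2prob : IsProbabilityMeasure γ2 := coupling_isProb hγ21
  have hx : MemLp (fun z : ℝ×ℝ => z.1) 2 γ :=
    memℒp_of_map measurable_fst.aemeasurable (by rw [h1]; exact hP2)
  have hy : MemLp (fun z : ℝ×ℝ => z.2) 2 γ :=
    memℒp_of_map measurable_snd.aemeasurable (by rw [h2]; exact hQ2)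
  have hx2 : MemLp (fun z : ℝ×ℝ => z.1) 2 γ2 :=
    memℒp_of_map measurable_fst.aemeasurable (by rw [hγ21]; exact hP2)
  have hy2 : MemLp (fun z : ℝ×ℝ => z.2) 2 γ2 :=
    memℒp_of_map measurable_snd.aemeasurable (by rw [hγ22]; exact hQ2)
  obtain ⟨hrep1, hint1⟩ := fubini_rep γ hx hy
  obtain ⟨hrep2, hint2⟩ := fubini_rep γ2 hx2 hy2
  have hle : ∫ z, z.1 * z.2 ∂γ ≤ ∫ z, z.1 * z.2 ∂γ2 := by
    rw [hrep1, hrep2]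
    refine integral_mono hint1 hint2 (fun p => ?_)
    rw [J_eq γ h1 h2 p.1 p.2, J_eq γ2 hγ21 hγ22 p.1 p.2]
    have hmono : (γ {z : ℝ×ℝ | p.1 < z.1 ∧ p.2 < z.2}).toReal
        ≤ (γ2 {z : ℝ×ℝ | p.1 < z.1 ∧ p.2 < z.2}).toReal := by
      apply ENNReal.toReal_mono (measure_ne_top γ2 _)
      exact gamma2_ge P Q γ h1 h2 p.1 p.2
    linarith
  refine hle.trans_eq ?_
  rw [hγ2def, integral_map hpair]
  · exact (measurable_fst.mul measurable_snd).aestronglyMeasurable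

end Hoeffding


section Assembly

lemma integral_comp_quantile (μ : Measure ℝ) [IsProbabilityMeasure μ] (f : ℝ → ℝ)
    (hf : Measurable f) : ∫ u, f (quantile' μ u) ∂unif01 = ∫ x, f x ∂μ := by
  conv_rhs => rw [← unif01_map_quantile μ]
  rw [integral_map (f := f) (aemeasurable_quantile μ) hf.aestronglyMeasurable]

lemma memℒp_quantile (μ : Measure ℝ) [IsProbabilityMeasure μ] (h : MemLp id 2 μ) :
    MemLp (quantile' μ) 2 unif01 :=
  memℒp_of_map (aemeasurable_quantile μ) (by rw [unif01_map_quantile μ]; exact h)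

lemma sq_integrable {α : Type*} [MeasurableSpace α] {ρ : Measure α} {f : α → ℝ}
    (hf : MemLp f 2 ρ) : Integrable (fun x => f x ^ 2) ρ := by
  refine (memL2_integrable_mul hf hf).congr (ae_of_all _ fun x => ?_)
  simp [pow_two]

lemma coord_sq_moment {P : Measure ℝ} {γ : Measure (ℝ×ℝ)} (h1 : γ.map Prod.fst = P) :
    ∫ z, z.1 ^ 2 ∂γ = ∫ x, x ^ 2 ∂P := by
  rw [← h1, integral_map (f := fun x : ℝ => x ^ 2) measurable_fst.aemeasurable
    ((measurable_id.pow_const 2).aestronglyMeasurable)]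

lemma coord_sq_moment' {Q : Measure ℝ} {γ : Measure (ℝ×ℝ)} (h2 : γ.map Prod.snd = Q) :
    ∫ z, z.2 ^ 2 ∂γ = ∫ x, x ^ 2 ∂Q := by
  rw [← h2, integral_map (f := fun x : ℝ => x ^ 2) measurable_snd.aemeasurable
    ((measurable_id.pow_const 2).aestronglyMeasurable)]

/-- Lower bound: any W2sq coupling cost is at least the quantile-coupling cost. -/
lemma quantile_dist_le_W2sq (P ν : Measure ℝ) [IsProbabilityMeasure P] [IsProbabilityMeasure ν]
    (hP2 : MemLp id 2 P) (hν2 : MemLp id 2 ν) :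
    ∫ u, (quantile' P u - quantile' ν u) ^ 2 ∂unif01 ≤ W2sq P ν := by
  have hfst : (P.prod ν).map Prod.fst = P := by
    rw [Measure.map_fst_prod]; simp [measure_univ]
  have hsnd : (P.prod ν).map Prod.snd = ν := by
    rw [Measure.map_snd_prod]; simp [measure_univ]
  refine le_csInf ⟨_, P.prod ν, hfst, hsnd, rfl⟩ ?_
  rintro c ⟨γ', hγ'1, hγ'2, rfl⟩
  haveI : IsProbabilityMeasure γ' := coupling_isProb hγ'1
  have hx : MemLp (fun z : ℝ×ℝ => z.1) 2 γ' :=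
    memℒp_of_map measurable_fst.aemeasurable (by rw [hγ'1]; exact hP2)
  have hy : MemLp (fun z : ℝ×ℝ => z.2) 2 γ' :=
    memℒp_of_map measurable_snd.aemeasurable (by rw [hγ'2]; exact hν2)
  have hexp : ∫ z, (z.1 - z.2) ^ 2 ∂γ'
      = ∫ z, z.1 ^ 2 ∂γ' - 2 * ∫ z, z.1 * z.2 ∂γ' + ∫ z, z.2 ^ 2 ∂γ' := by
    have hpt : ∀ z : ℝ×ℝ, (z.1 - z.2) ^ 2 = z.1 ^ 2 - 2 * (z.1 * z.2) + z.2 ^ 2 :=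
      fun z => by ring
    rw [integral_congr_ae (ae_of_all _ hpt)]
    have i1 : Integrable (fun z : ℝ×ℝ => z.1 ^ 2) γ' := sq_integrable hx
    have i2 : Integrable (fun z : ℝ×ℝ => 2 * (z.1 * z.2)) γ' :=
      (memL2_integrable_mul hx hy).const_mul 2
    have i3 : Integrable (fun z : ℝ×ℝ => z.2 ^ 2) γ' := sq_integrable hy
    have i12 : Integrable (fun z : ℝ×ℝ => z.1 ^ 2 - 2 * (z.1 * z.2)) γ' := i1.sub i2
    rw [integral_add i12 i3, integral_sub i1 i2, integral_const_mul]
  have hQP := memℒp_quantile P hP2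
  have hQν := memℒp_quantile ν hν2
  have hexp2 : ∫ u, (quantile' P u - quantile' ν u) ^ 2 ∂unif01
      = ∫ u, quantile' P u ^ 2 ∂unif01 - 2 * ∫ u, quantile' P u * quantile' ν u ∂unif01
        + ∫ u, quantile' ν u ^ 2 ∂unif01 := by
    have hpt : ∀ u : ℝ, (quantile' P u - quantile' ν u) ^ 2
        = quantile' P u ^ 2 - 2 * (quantile' P u * quantile' ν u) + quantile' ν u ^ 2 :=
      fun u => by ring
    rw [integral_congr_ae (ae_of_all _ hpt)]
    have i1 : Integrable (fun u => quantile' P u ^ 2) unif01 := sq_integrable hQP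
    have i2 : Integrable (fun u => 2 * (quantile' P u * quantile' ν u)) unif01 :=
      (memL2_integrable_mul hQP hQν).const_mul 2
    have i3 : Integrable (fun u => quantile' ν u ^ 2) unif01 := sq_integrable hQν
    have i12 : Integrable (fun u => quantile' P u ^ 2 - 2 * (quantile' P u * quantile' ν u))
        unif01 := i1.sub i2
    rw [integral_add i12 i3, integral_sub i1 i2, integral_const_mul]
  have hm1 : ∫ z, z.1 ^ 2 ∂γ' = ∫ u, quantile' P u ^ 2 ∂unif01 := by
    rw [coord_sq_moment hγ'1, ← integral_comp_quantile P (fun x => x ^ 2) (measurable_id.pow_const 2)]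
  have hm2 : ∫ z, z.2 ^ 2 ∂γ' = ∫ u, quantile' ν u ^ 2 ∂unif01 := by
    rw [coord_sq_moment' hγ'2, ← integral_comp_quantile ν (fun x => x ^ 2) (measurable_id.pow_const 2)]
  have hhoeff := hoeffding P ν hP2 hν2 γ' hγ'1 hγ'2
  rw [hexp, hexp2, ← hm1, ← hm2]
  linarith

/-- Upper bound: W2sq is at most the quantile coupling cost (for compatible second marginal). -/
lemma W2sq_le_quantile_dist (P : Measure ℝ) [IsProbabilityMeasure P]
    {g : ℝ → ℝ} (hg : AEMeasurable g unif01) :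
    W2sq P (unif01.map g) ≤ ∫ u, (quantile' P u - g u) ^ 2 ∂unif01 := by
  have hbdd : BddBelow { c : ℝ | ∃ γ : Measure (ℝ × ℝ),
      γ.map Prod.fst = P ∧ γ.map Prod.snd = unif01.map g ∧ c = ∫ z, (z.1 - z.2) ^ 2 ∂γ } := by
    refine ⟨0, ?_⟩
    rintro c ⟨γ', _, _, rfl⟩
    exact integral_nonneg (fun z => sq_nonneg _)
  have hpair : AEMeasurable (fun u => (quantile' P u, g u)) unif01 :=
    (aemeasurable_quantile P).prodMk hg
  refine csInf_le hbdd ⟨unif01.map (fun u => (quantile' P u, g u)), ?_, ?_, ?_⟩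
  · rw [AEMeasurable.map_map_of_aemeasurable measurable_fst.aemeasurable hpair]
    exact unif01_map_quantile P
  · rw [AEMeasurable.map_map_of_aemeasurable measurable_snd.aemeasurable hpair]
    rfl
  · rw [integral_map (f := fun z : ℝ×ℝ => (z.1 - z.2) ^ 2) hpair (((measurable_fst.sub measurable_snd).pow_const 2).aestronglyMeasurable)]

/-- Pointwise bias-variance inequality. -/
lemma biasvar {k : ℕ} (π : Fin k → ℝ) (hπsum : ∑ s, π s = 1) (a : Fin k → ℝ) (y : ℝ) :
    ∑ s, π s * (a s - ∑ t, π t * a t) ^ 2 ≤ ∑ s, π s * (a s - y) ^ 2 := by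
  set m := ∑ t, π t * a t with hm
  have key : ∑ s, π s * (a s - y) ^ 2 - ∑ s, π s * (a s - m) ^ 2 = (m - y) ^ 2 := by
    rw [← Finset.sum_sub_distrib]
    have hpt : ∀ s ∈ Finset.univ, π s * (a s - y) ^ 2 - π s * (a s - m) ^ 2
        = (2 * (m - y)) * (π s * a s) - ((m - y) * (y + m)) * π s := fun s _ => by ring
    rw [Finset.sum_congr rfl hpt, Finset.sum_sub_distrib, ← Finset.mul_sum, ← Finset.mul_sum,
      hπsum, ← hm]
    ring
  nlinarith [sq_nonneg (m - y)]

end Assembly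

section Cost
variable {k : ℕ}

lemma marg_isProb (γ : Measure (Fin k → ℝ)) (s : Fin k) {P : Measure ℝ}
    [IsProbabilityMeasure P] (h : γ.map (fun z => z s) = P) : IsProbabilityMeasure γ := by
  constructor
  have hh := Measure.map_apply (μ := γ) (measurable_pi_apply s) MeasurableSet.univ
  rw [h] at hh
  simpa [measure_univ] using hh.symm

lemma cost_eq (π : Fin k → ℝ) (hπsum : ∑ s, π s = 1)
    (b : (Fin k → ℝ) → ℝ) (hb : ∀ z, b z = ∑ s, π s * z s)
    (γ : Measure (Fin k → ℝ)) [IsProbabilityMeasure γ]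
    (hz2 : ∀ s, MemLp (fun z : Fin k → ℝ => z s) 2 γ) :
    ∑ s, π s * ∫ z, (z s - b z) ^ 2 ∂γ
      = ∑ s, π s * ∫ z, (z s) ^ 2 ∂γ - ∫ z, (b z) ^ 2 ∂γ := by
  have hb2 : MemLp b 2 γ := by
    have hbe : b = fun z => ∑ s, π s * z s := funext hb
    rw [hbe]
    exact memLp_finset_sum Finset.univ (fun s _ => (hz2 s).const_mul (π s))
  have hper : ∀ s, ∫ z, (z s - b z) ^ 2 ∂γ
      = ∫ z, (z s) ^ 2 ∂γ - 2 * ∫ z, z s * b z ∂γ + ∫ z, (b z) ^ 2 ∂γ := by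
    intro s
    have hpt : ∀ z : Fin k → ℝ, (z s - b z) ^ 2
        = (z s) ^ 2 - 2 * (z s * b z) + (b z) ^ 2 := fun z => by ring
    rw [integral_congr_ae (ae_of_all _ hpt)]
    have i1 : Integrable (fun z : Fin k → ℝ => (z s) ^ 2) γ := sq_integrable (hz2 s)
    have i2 : Integrable (fun z : Fin k → ℝ => 2 * (z s * b z)) γ :=
      (memL2_integrable_mul (hz2 s) hb2).const_mul 2
    have i3 : Integrable (fun z : Fin k → ℝ => (b z) ^ 2) γ := sq_integrable hb2
    have i12 : Integrable (fun z : Fin k → ℝ => (z s) ^ 2 - 2 * (z s * b z)) γ := i1.sub i2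
    rw [integral_add i12 i3, integral_sub i1 i2, integral_const_mul]
  have hcross : ∑ s, π s * ∫ z, z s * b z ∂γ = ∫ z, (b z) ^ 2 ∂γ := by
    have step1 : ∀ s ∈ Finset.univ, π s * ∫ z, z s * b z ∂γ
        = ∫ z, π s * (z s * b z) ∂γ := fun s _ => (integral_const_mul (π s) _).symm
    rw [Finset.sum_congr rfl step1,
      ← integral_finset_sum Finset.univ
        (fun s _ => (memL2_integrable_mul (hz2 s) hb2).const_mul (π s))]
    refine integral_congr_ae (ae_of_all _ fun z => ?_)
    show ∑ s, π s * (z s * b z) = (b z) ^ 2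
    have : ∀ s ∈ Finset.univ, π s * (z s * b z) = (π s * z s) * b z := fun s _ => by ring
    rw [Finset.sum_congr rfl this, ← Finset.sum_mul, ← hb z]
    ring
  have expand : ∀ s ∈ Finset.univ, π s * ∫ z, (z s - b z) ^ 2 ∂γ
      = π s * ∫ z, (z s) ^ 2 ∂γ - 2 * (π s * ∫ z, z s * b z ∂γ)
        + (∫ z, (b z) ^ 2 ∂γ) * π s := by
    intro s _
    rw [hper s]; ring
  rw [Finset.sum_congr rfl expand, Finset.sum_add_distrib, Finset.sum_sub_distrib,
    ← Finset.mul_sum, ← Finset.mul_sum, hπsum, hcross]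
  ring

lemma bsq_expand (π : Fin k → ℝ)
    (b : (Fin k → ℝ) → ℝ) (hb : ∀ z, b z = ∑ s, π s * z s)
    (γ : Measure (Fin k → ℝ)) [IsProbabilityMeasure γ]
    (hz2 : ∀ s, MemLp (fun z : Fin k → ℝ => z s) 2 γ) :
    ∫ z, (b z) ^ 2 ∂γ = ∑ s, ∑ t, (π s * π t) * ∫ z, z s * z t ∂γ := by
  have hpt : ∀ z : Fin k → ℝ, (b z) ^ 2 = ∑ s, ∑ t, (π s * π t) * (z s * z t) := by
    intro z
    rw [hb z, pow_two, Finset.sum_mul_sum]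
    refine Finset.sum_congr rfl fun s _ => Finset.sum_congr rfl fun t _ => by ring
  rw [integral_congr_ae (ae_of_all _ hpt)]
  rw [integral_finset_sum Finset.univ (fun s _ => integrable_finset_sum Finset.univ
    (fun t _ => (memL2_integrable_mul (hz2 s) (hz2 t)).const_mul (π s * π t)))]
  refine Finset.sum_congr rfl fun s _ => ?_
  rw [integral_finset_sum Finset.univ
    (fun t _ => (memL2_integrable_mul (hz2 s) (hz2 t)).const_mul (π s * π t))]
  exact Finset.sum_congr rfl fun t _ => integral_const_mul _ _

lemma pair_cmp (μ : Fin k → Measure ℝ) (hμ : ∀ s, IsProbabilityMeasure (μ s))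
    (hμ2 : ∀ s, MemLp id 2 (μ s)) (γ : Measure (Fin k → ℝ))
    (hmarg : ∀ s, γ.map (fun z => z s) = μ s) (s t : Fin k) :
    ∫ z, z s * z t ∂γ ≤ ∫ u, quantile' (μ s) u * quantile' (μ t) u ∂unif01 := by
  haveI := hμ s; haveI := hμ t
  have hm : Measurable (fun z : Fin k → ℝ => (z s, z t)) :=
    (measurable_pi_apply s).prodMk (measurable_pi_apply t)
  have h1 : (γ.map (fun z : Fin k → ℝ => (z s, z t))).map Prod.fst = μ s := by
    rw [Measure.map_map measurable_fst hm]; exact hmarg s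
  have h2 : (γ.map (fun z : Fin k → ℝ => (z s, z t))).map Prod.snd = μ t := by
    rw [Measure.map_map measurable_snd hm]; exact hmarg t
  have heq : ∫ z, z s * z t ∂γ
      = ∫ p : ℝ×ℝ, p.1 * p.2 ∂(γ.map (fun z : Fin k → ℝ => (z s, z t))) := by
    rw [integral_map (f := fun p : ℝ×ℝ => p.1 * p.2) hm.aemeasurable (measurable_fst.mul measurable_snd).aestronglyMeasurable]
  rw [heq]
  exact hoeffding (μ s) (μ t) (hμ2 s) (hμ2 t) _ h1 h2

lemma coord_sq_moment_pi {P : Measure ℝ} {γ : Measure (Fin k → ℝ)} {s : Fin k}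
    (h : γ.map (fun z => z s) = P) : ∫ z, (z s) ^ 2 ∂γ = ∫ x, x ^ 2 ∂P := by
  rw [← h]
  have hm : Measurable (fun z : Fin k → ℝ => z s) := measurable_pi_apply s
  exact (integral_map hm.aemeasurable
    ((measurable_id.pow_const 2).aestronglyMeasurable)).symm

end Cost

/-- **Multimarginal formulation of the barycenter** (equations (9)–(10)). The pushforward
`γ*` of `Unif(0,1)` under `u ↦ (F_{μ_1}⁻¹(u),…,F_{μ_k}⁻¹(u))`: (i) has marginals
`μ_1,…,μ_k`; (ii) minimizes `γ ↦ Σ_s π_s ∫ |z_s − b(z)|² dγ(z)` over measures with these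
marginals, where `b(z) = Σ_s π_s z_s`; (iii) satisfies `b_#γ* = ν̄`; and (iv) its
multimarginal cost equals `inf_ν Σ_s π_s W₂²(μ_s, ν)`. -/
theorem multimarginal_formulation
    (k : ℕ) (hk : 0 < k)
    (μ : Fin k → Measure ℝ) (hμ : ∀ s, IsProbabilityMeasure (μ s))
    (hμ2 : ∀ s, MemLp id 2 (μ s))
    (π : Fin k → ℝ) (hπpos : ∀ s, 0 < π s) (hπsum : ∑ s, π s = 1)
    (b : (Fin k → ℝ) → ℝ) (hb : ∀ z, b z = ∑ s, π s * z s)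
    (γstar : Measure (Fin k → ℝ))
    (hγstar : γstar = unif01.map (fun u s => quantile' (μ s) u))
    (νbar : Measure ℝ)
    (hνbar : νbar = unif01.map (fun u => ∑ s, π s * quantile' (μ s) u)) :
    (∀ s, γstar.map (fun z => z s) = μ s) ∧
    (∀ γ : Measure (Fin k → ℝ), (∀ s, γ.map (fun z => z s) = μ s) →
      ∑ s, π s * ∫ z, (z s - b z) ^ 2 ∂γstar
        ≤ ∑ s, π s * ∫ z, (z s - b z) ^ 2 ∂γ) ∧
    γstar.map b = νbar ∧
    (∑ s, π s * ∫ z, (z s - b z) ^ 2 ∂γstar)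
      = sInf { c : ℝ | ∃ ν : Measure ℝ, IsProbabilityMeasure ν ∧ MemLp id 2 ν ∧
          c = ∑ s, π s * W2sq (μ s) ν } := by

  -- basic measurability facts
  have hQae : ∀ s, AEMeasurable (fun u => quantile' (μ s) u) unif01 := fun s => by
    haveI := hμ s; exact aemeasurable_quantile (μ s)
  have hTae : AEMeasurable (fun u (s : Fin k) => quantile' (μ s) u) unif01 := by
    refine ⟨fun u s => (hQae s).mk _ u,
      measurable_pi_iff.mpr fun s => (hQae s).measurable_mk, ?_⟩
    have hall : ∀ᵐ u ∂unif01, ∀ s, quantile' (μ s) u = (hQae s).mk _ u :=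
      ae_all_iff.mpr fun s => (hQae s).ae_eq_mk
    filter_upwards [hall] with u hu
    exact funext hu
  have hbmeas : Measurable b := by
    have hbe : b = fun z => ∑ s, π s * z s := funext hb
    rw [hbe]
    exact Finset.measurable_fun_sum Finset.univ fun s _ => Measurable.const_mul (f := fun z : Fin k → ℝ => z s) (measurable_pi_apply s) (π s)
  -- (i) marginals of γstar
  have hmargstar : ∀ s, γstar.map (fun z => z s) = μ s := by
    intro s; haveI := hμ s
    rw [hγstar, AEMeasurable.map_map_of_aemeasurable (measurable_pi_apply s).aemeasurable hTae]
    exact unif01_map_quantile (μ s)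
  haveI hprobstar : IsProbabilityMeasure γstar := by
    rw [hγstar]; exact Measure.isProbabilityMeasure_map hTae
  have hz2star : ∀ s, MemLp (fun z : Fin k → ℝ => z s) 2 γstar := fun s => by
    haveI := hμ s
    exact memℒp_of_map (measurable_pi_apply s).aemeasurable (by rw [hmargstar s]; exact hμ2 s)
  -- transfer integrals over γstar to unif01
  have hstar_int : ∀ (f : (Fin k → ℝ) → ℝ), Measurable f →
      ∫ z, f z ∂γstar = ∫ u, f (fun s => quantile' (μ s) u) ∂unif01 := by
    intro f hf
    rw [hγstar, integral_map hTae hf.aestronglyMeasurable]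
  have hcost_star : ∀ s, ∫ z, (z s - b z) ^ 2 ∂γstar
      = ∫ u, (quantile' (μ s) u - ∑ t, π t * quantile' (μ t) u) ^ 2 ∂unif01 := by
    intro s
    rw [hstar_int (fun z => (z s - b z) ^ 2) (((measurable_pi_apply s).sub hbmeas).pow_const 2)]
    refine integral_congr_ae (ae_of_all _ fun u => ?_)
    show ((fun t : Fin k => quantile' (μ t) u) s - b fun t : Fin k => quantile' (μ t) u) ^ 2
        = (quantile' (μ s) u - ∑ t, π t * quantile' (μ t) u) ^ 2
    have hbu : b (fun t : Fin k => quantile' (μ t) u) = ∑ t, π t * quantile' (μ t) u := hb _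
    rw [hbu]
  -- L² facts for quantiles
  have hQ2 : ∀ s, MemLp (fun u => quantile' (μ s) u) 2 unif01 := fun s => by
    haveI := hμ s; exact memℒp_quantile (μ s) (hμ2 s)
  have hQb2 : MemLp (fun u => ∑ s, π s * quantile' (μ s) u) 2 unif01 :=
    memLp_finset_sum Finset.univ fun s _ => (hQ2 s).const_mul (π s)
  have hQbae : AEMeasurable (fun u => ∑ s, π s * quantile' (μ s) u) unif01 :=
    Finset.aemeasurable_fun_sum Finset.univ fun s _ => (hQae s).const_mul (π s)
  have hQbSub2 : ∀ s, MemLp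
      (fun u => quantile' (μ s) u - ∑ t, π t * quantile' (μ t) u) 2 unif01 := fun s =>
    (hQ2 s).sub hQb2
  -- (iii)
  have hmap_b : γstar.map b = νbar := by
    rw [hγstar, AEMeasurable.map_map_of_aemeasurable hbmeas.aemeasurable hTae, hνbar]
    congr 1
    funext u
    exact hb _
  -- (ii)
  have part2 : ∀ γ : Measure (Fin k → ℝ), (∀ s, γ.map (fun z => z s) = μ s) →
      ∑ s, π s * ∫ z, (z s - b z) ^ 2 ∂γstar ≤ ∑ s, π s * ∫ z, (z s - b z) ^ 2 ∂γ := by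
    intro γ hmargγ
    haveI : IsProbabilityMeasure γ := by
      haveI := hμ ⟨0, hk⟩
      exact marg_isProb γ ⟨0, hk⟩ (hmargγ ⟨0, hk⟩)
    have hz2γ : ∀ s, MemLp (fun z : Fin k → ℝ => z s) 2 γ := fun s => by
      haveI := hμ s
      exact memℒp_of_map (measurable_pi_apply s).aemeasurable (by rw [hmargγ s]; exact hμ2 s)
    have hmom : ∀ s, ∫ z, (z s) ^ 2 ∂γ = ∫ z, (z s) ^ 2 ∂γstar := by
      intro s
      rw [coord_sq_moment_pi (hmargγ s), coord_sq_moment_pi (hmargstar s)]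
    have hbsq : ∫ z, (b z) ^ 2 ∂γ ≤ ∫ z, (b z) ^ 2 ∂γstar := by
      rw [bsq_expand π b hb γ hz2γ, bsq_expand π b hb γstar hz2star]
      refine Finset.sum_le_sum fun s _ => Finset.sum_le_sum fun t _ => ?_
      refine mul_le_mul_of_nonneg_left ?_ (mul_nonneg (hπpos s).le (hπpos t).le)
      have hQQ : ∫ z, z s * z t ∂γstar
          = ∫ u, quantile' (μ s) u * quantile' (μ t) u ∂unif01 :=
        hstar_int (fun z => z s * z t) ((measurable_pi_apply s).mul (measurable_pi_apply t))
      rw [hQQ]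
      exact pair_cmp μ hμ hμ2 γ hmargγ s t
    rw [cost_eq π hπsum b hb γ hz2γ, cost_eq π hπsum b hb γstar hz2star]
    have hsum : ∑ s, π s * ∫ z, (z s) ^ 2 ∂γ = ∑ s, π s * ∫ z, (z s) ^ 2 ∂γstar :=
      Finset.sum_congr rfl fun s _ => by rw [hmom s]
    linarith
  -- νbar facts
  haveI hνbarprob : IsProbabilityMeasure νbar := by
    rw [hνbar]; exact Measure.isProbabilityMeasure_map hQbae
  have hνbar2 : MemLp id 2 νbar := by
    rw [hνbar]
    exact (memLp_map_measure_iff aestronglyMeasurable_id hQbae).mpr hQb2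
  -- (iv): lower bound
  have hlow : ∀ c ∈ { c : ℝ | ∃ ν : Measure ℝ, IsProbabilityMeasure ν ∧ MemLp id 2 ν ∧
      c = ∑ s, π s * W2sq (μ s) ν },
      (∑ s, π s * ∫ z, (z s - b z) ^ 2 ∂γstar) ≤ c := by
    rintro c ⟨ν, hνprob, hν2, rfl⟩
    haveI := hνprob
    have hQν2 : MemLp (quantile' ν) 2 unif01 := memℒp_quantile ν hν2
    have hWs : ∀ s, ∫ u, (quantile' (μ s) u - quantile' ν u) ^ 2 ∂unif01 ≤ W2sq (μ s) ν := by
      intro s; haveI := hμ s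
      exact quantile_dist_le_W2sq (μ s) ν (hμ2 s) hν2
    have hQsubν2 : ∀ s : Fin k, MemLp (fun u => quantile' (μ s) u - quantile' ν u) 2 unif01 :=
      fun s => (hQ2 s).sub hQν2
    have lhs_eq : ∑ s, π s * ∫ z, (z s - b z) ^ 2 ∂γstar
        = ∫ u, ∑ s, π s * (quantile' (μ s) u - ∑ t, π t * quantile' (μ t) u) ^ 2 ∂unif01 := by
      rw [Finset.sum_congr rfl fun s (_ : s ∈ Finset.univ) => by rw [hcost_star s]]
      rw [Finset.sum_congr rfl fun s (_ : s ∈ Finset.univ) =>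
        (integral_const_mul (π s) _).symm]
      rw [← integral_finset_sum Finset.univ
        (fun s _ => (sq_integrable (hQbSub2 s)).const_mul (π s))]
    have rhs_eq : ∑ s, π s * ∫ u, (quantile' (μ s) u - quantile' ν u) ^ 2 ∂unif01
        = ∫ u, ∑ s, π s * (quantile' (μ s) u - quantile' ν u) ^ 2 ∂unif01 := by
      rw [Finset.sum_congr rfl fun s (_ : s ∈ Finset.univ) =>
        (integral_const_mul (π s) _).symm]
      rw [← integral_finset_sum Finset.univ
        (fun s _ => (sq_integrable (hQsubν2 s)).const_mul (π s))]
    have key : ∑ s, π s * ∫ z, (z s - b z) ^ 2 ∂γstar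
        ≤ ∑ s, π s * ∫ u, (quantile' (μ s) u - quantile' ν u) ^ 2 ∂unif01 := by
      rw [lhs_eq, rhs_eq]
      refine integral_mono ?_ ?_ (fun u =>
        biasvar π hπsum (fun s => quantile' (μ s) u) (quantile' ν u))
      · exact integrable_finset_sum Finset.univ
          (fun s _ => (sq_integrable (hQbSub2 s)).const_mul (π s))
      · exact integrable_finset_sum Finset.univ
          (fun s _ => (sq_integrable (hQsubν2 s)).const_mul (π s))
    have last : ∑ s, π s * ∫ u, (quantile' (μ s) u - quantile' ν u) ^ 2 ∂unif01
        ≤ ∑ s, π s * W2sq (μ s) ν :=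
      Finset.sum_le_sum fun s _ => mul_le_mul_of_nonneg_left (hWs s) (hπpos s).le
    linarith
  -- (iv): νbar achieves the value
  have hub : ∑ s, π s * W2sq (μ s) νbar ≤ ∑ s, π s * ∫ z, (z s - b z) ^ 2 ∂γstar := by
    refine Finset.sum_le_sum fun s _ => mul_le_mul_of_nonneg_left ?_ (hπpos s).le
    haveI := hμ s
    have h := W2sq_le_quantile_dist (μ s) hQbae
    rw [← hνbar] at h
    rw [hcost_star s]
    exact h
  have hmemW : ∑ s, π s * W2sq (μ s) νbar = ∑ s, π s * ∫ z, (z s - b z) ^ 2 ∂γstar :=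
    le_antisymm hub (hlow _ ⟨νbar, hνbarprob, hνbar2, rfl⟩)
  refine ⟨hmargstar, part2, hmap_b, ?_⟩
  refine le_antisymm (le_csInf ⟨_, νbar, hνbarprob, hνbar2, rfl⟩ hlow) ?_
  exact csInf_le ⟨_, hlow⟩ ⟨νbar, hνbarprob, hνbar2, hmemW.symm⟩
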